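/- Let G be a group and C ⊆ G a normal cone whose induced relation ≥ is a partial order. For dominants f, g define κ(f,g) = max(log γ(f,g), log γ(g,f)). Then κ is a pseudo-distance on the set of dominants: κ(f,g) ≥ 0, κ(f,f) = 0, κ(f,g) = κ(g,f), and κ(f,h) ≤ κ(f,g) + κ(g,h) for all dominants f, g, h. -/
import Mathlib


open Filter

/-- A subset `C` of a group is a *normal cone* if it contains `1`, is closed under
multiplication, and is invariant under conjugation. -/
def IsNormalCone {G : Type*} [Group G] (C : Set G) : Prop :=
  (1 : G) ∈ C ∧ (∀ f g : G, f ∈ C → g ∈ C → f * g ∈ C) ∧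
    (∀ f h : G, f ∈ C → h * f * h⁻¹ ∈ C)

/-- The relation `f ≥ g` induced by the cone `C`: `f * g⁻¹ ∈ C`. -/
def ConeGe {G : Type*} [Group G] (C : Set G) (f g : G) : Prop := f * g⁻¹ ∈ C

/-- `f` is a *dominant*: it lies in the cone, is not `1`, and some power of `f`
dominates any given element. -/
def IsDominant {G : Type*} [Group G] (C : Set G) (f : G) : Prop :=
  f ∈ C ∧ f ≠ 1 ∧ ∀ g : G, ∃ p : ℕ, ConeGe C (f ^ p) g

/-- `γ_k(f,g) = inf { p ∈ ℤ | f^p ≥ g^k }`. -/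
noncomputable def gammaK {G : Type*} [Group G] (C : Set G) (f g : G) (k : ℕ) : ℤ :=
  sInf {p : ℤ | ConeGe C (f ^ p) (g ^ k)}


section Aux
variable {G : Type*} [Group G] {C : Set G}

lemma cone_pow_mem (hC : IsNormalCone C) {f : G} (hf : f ∈ C) : ∀ n : ℕ, f ^ n ∈ C := by
  intro n
  induction n with
  | zero => simpa using hC.1
  | succ n ih => rw [pow_succ]; exact hC.2.1 _ _ ih hf

lemma cone_zpow_mem (hC : IsNormalCone C) {f : G} (hf : f ∈ C) {p : ℤ} (hp : 0 ≤ p) :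
    f ^ p ∈ C := by
  obtain ⟨n, rfl⟩ := Int.eq_ofNat_of_zero_le hp
  rw [zpow_natCast]; exact cone_pow_mem hC hf n

lemma cone_eq_one (hanti : ∀ f g : G, ConeGe C f g → ConeGe C g f → f = g)
    {f : G} (hf : f ∈ C) (hfi : f⁻¹ ∈ C) : f = 1 := by
  have h1 : ConeGe C f 1 := by simpa [ConeGe] using hf
  have h2 : ConeGe C 1 f := by simpa [ConeGe] using hfi
  exact hanti f 1 h1 h2

lemma cone_zpow_nonneg (hC : IsNormalCone C)
    (hanti : ∀ f g : G, ConeGe C f g → ConeGe C g f → f = g)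
    {f : G} (hf : f ∈ C) (hf1 : f ≠ 1) {p : ℤ} (hp : f ^ p ∈ C) : 0 ≤ p := by
  by_contra hlt
  push_neg at hlt
  have h1 : f ^ (-p - 1) ∈ C := cone_zpow_mem hC hf (by omega)
  have h2 : f ^ (-p - 1) * f ^ p ∈ C := hC.2.1 _ _ h1 hp
  have h3 : f ^ (-p - 1) * f ^ p = f⁻¹ := by
    rw [← zpow_add, show -p - 1 + p = -1 by ring, zpow_neg_one]
  rw [h3] at h2
  exact hf1 (cone_eq_one hanti hf h2)

lemma gset_nonempty {f : G} (hf : IsDominant C f) (g : G) (k : ℕ) :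
    {p : ℤ | ConeGe C (f ^ p) (g ^ k)}.Nonempty := by
  obtain ⟨p, hp⟩ := hf.2.2 (g ^ k)
  exact ⟨(p : ℤ), by simpa [zpow_natCast] using hp⟩

lemma gset_one_le (hC : IsNormalCone C)
    (hanti : ∀ f g : G, ConeGe C f g → ConeGe C g f → f = g)
    {f g : G} (hf : IsDominant C f) (hg : IsDominant C g) {k : ℕ} (hk : 1 ≤ k) :
    ∀ p ∈ {p : ℤ | ConeGe C (f ^ p) (g ^ k)}, 1 ≤ p := by
  intro p hp
  by_contra hlt
  push_neg at hlt
  have h1 : f ^ (-p) ∈ C := cone_zpow_mem hC hf.1 (by omega)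
  have h2 : f ^ (-p) * (f ^ p * (g ^ k)⁻¹) ∈ C := hC.2.1 _ _ h1 hp
  have h3 : f ^ (-p) * (f ^ p * (g ^ k)⁻¹) = (g ^ k)⁻¹ := by
    rw [← mul_assoc, ← zpow_add]; group
  rw [h3] at h2
  have h4 : g ^ k = 1 := cone_eq_one hanti (cone_pow_mem hC hg.1 k) h2
  have h5 : g ^ (k - 1) = g⁻¹ := by
    refine eq_inv_of_mul_eq_one_left ?_
    rw [← pow_succ]
    rwa [Nat.sub_add_cancel hk]
  have h6 : g⁻¹ ∈ C := h5 ▸ cone_pow_mem hC hg.1 (k - 1)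
  exact hg.2.1 (cone_eq_one hanti hg.1 h6)

lemma gset_bddBelow (hC : IsNormalCone C)
    (hanti : ∀ f g : G, ConeGe C f g → ConeGe C g f → f = g)
    {f g : G} (hf : IsDominant C f) (hg : IsDominant C g) {k : ℕ} (hk : 1 ≤ k) :
    BddBelow {p : ℤ | ConeGe C (f ^ p) (g ^ k)} :=
  ⟨1, gset_one_le hC hanti hf hg hk⟩

lemma gammaK_spec (hC : IsNormalCone C)
    (hanti : ∀ f g : G, ConeGe C f g → ConeGe C g f → f = g)
    {f g : G} (hf : IsDominant C f) (hg : IsDominant C g) {k : ℕ} (hk : 1 ≤ k) :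
    ConeGe C (f ^ gammaK C f g k) (g ^ k) ∧ 1 ≤ gammaK C f g k := by
  have hmem := Int.csInf_mem (gset_nonempty hf g k) (gset_bddBelow hC hanti hf hg hk)
  exact ⟨hmem, gset_one_le hC hanti hf hg hk _ hmem⟩

lemma gammaK_le (hC : IsNormalCone C)
    (hanti : ∀ f g : G, ConeGe C f g → ConeGe C g f → f = g)
    {f g : G} (hf : IsDominant C f) (hg : IsDominant C g) {k : ℕ} (hk : 1 ≤ k)
    {p : ℤ} (hp : ConeGe C (f ^ p) (g ^ k)) : gammaK C f g k ≤ p :=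
  csInf_le (gset_bddBelow hC hanti hf hg hk) hp

lemma coneGe_trans (hC : IsNormalCone C) {a b c : G}
    (h1 : ConeGe C a b) (h2 : ConeGe C b c) : ConeGe C a c := by
  have h := hC.2.1 _ _ h1 h2
  have e : a * b⁻¹ * (b * c⁻¹) = a * c⁻¹ := by group
  rwa [e] at h

lemma coneGe_mul (hC : IsNormalCone C) {a b c d : G}
    (h1 : ConeGe C a b) (h2 : ConeGe C c d) : ConeGe C (a * c) (b * d) := by
  have h3 : a * (c * d⁻¹) * a⁻¹ ∈ C := hC.2.2 _ _ h2
  have h := hC.2.1 _ _ h3 h1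
  have e : a * (c * d⁻¹) * a⁻¹ * (a * b⁻¹) = a * c * (b * d)⁻¹ := by group
  rwa [e] at h

/-- `γ_k(f,f) = k`. -/
lemma gammaK_self (hC : IsNormalCone C)
    (hanti : ∀ f g : G, ConeGe C f g → ConeGe C g f → f = g)
    {f : G} (hf : IsDominant C f) {k : ℕ} (hk : 1 ≤ k) :
    gammaK C f f k = (k : ℤ) := by
  have hle : gammaK C f f k ≤ (k : ℤ) := by
    refine gammaK_le hC hanti hf hf hk ?_
    show f ^ (k : ℤ) * (f ^ k)⁻¹ ∈ C
    rw [zpow_natCast, mul_inv_cancel]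
    exact hC.1
  have hmem := (gammaK_spec hC hanti hf hf hk).1
  have hmem' : f ^ gammaK C f f k * (f ^ k)⁻¹ ∈ C := hmem
  have h2 : f ^ (gammaK C f f k - (k : ℤ)) ∈ C := by
    have e : f ^ gammaK C f f k * (f ^ k)⁻¹ = f ^ (gammaK C f f k - (k : ℤ)) := by
      rw [← zpow_natCast f k, ← zpow_neg, ← zpow_add]; ring_nf
    rwa [e] at hmem'
  have := cone_zpow_nonneg hC hanti hf.1 hf.2.1 h2
  omega

/-- The chain inequality: `γ_k(f,h) ≤ γ_{γ_k(g,h)}(f,g)`. -/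
lemma gammaK_chain (hC : IsNormalCone C)
    (hanti : ∀ f g : G, ConeGe C f g → ConeGe C g f → f = g)
    {f g h : G} (hf : IsDominant C f) (hg : IsDominant C g) (hh : IsDominant C h)
    {k : ℕ} (hk : 1 ≤ k) :
    gammaK C f h k ≤ gammaK C f g (gammaK C g h k).toNat := by
  set m : ℕ := (gammaK C g h k).toNat with hm
  have hm1 : 1 ≤ m := by
    have := (gammaK_spec hC hanti hg hh hk).2
    omega
  have hmz : (m : ℤ) = gammaK C g h k := by
    have := (gammaK_spec hC hanti hg hh hk).2
    omega
  have h1 : ConeGe C (f ^ gammaK C f g m) (g ^ m) := (gammaK_spec hC hanti hf hg hm1).1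
  have h2 : ConeGe C (g ^ (m : ℤ)) (h ^ k) := by
    rw [hmz]; exact (gammaK_spec hC hanti hg hh hk).1
  rw [zpow_natCast] at h2
  exact gammaK_le hC hanti hf hh hk (coneGe_trans hC h1 h2)

/-- Subadditive bound: `γ_m(f,g) ≤ m * γ_1(f,g)`. -/
lemma gammaK_le_mul (hC : IsNormalCone C)
    (hanti : ∀ f g : G, ConeGe C f g → ConeGe C g f → f = g)
    {f g : G} (hf : IsDominant C f) (hg : IsDominant C g) {m : ℕ} (hm : 1 ≤ m) :
    gammaK C f g m ≤ (m : ℤ) * gammaK C f g 1 := by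
  have h1 : ConeGe C (f ^ gammaK C f g 1) (g ^ (1 : ℕ)) := (gammaK_spec hC hanti hf hg le_rfl).1
  rw [pow_one] at h1
  have key : ∀ n : ℕ, ConeGe C (f ^ ((n : ℤ) * gammaK C f g 1)) (g ^ n) := by
    intro n
    induction n with
    | zero => show f ^ ((0 : ℤ) * _) * ((g : G) ^ (0 : ℕ))⁻¹ ∈ C; simpa using hC.1
    | succ n ih =>
      have := coneGe_mul hC ih h1
      have e1 : f ^ ((n : ℤ) * gammaK C f g 1) * f ^ gammaK C f g 1
          = f ^ (((n + 1 : ℕ) : ℤ) * gammaK C f g 1) := by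
        rw [← zpow_add]; congr 1; push_cast; ring
      have e2 : g ^ n * g = g ^ (n + 1) := (pow_succ g n).symm
      rw [e1, e2] at this
      exact this
  exact gammaK_le hC hanti hf hg hm (key m)

end Aux
/-- `κ(f,g) = max(log γ(f,g), log γ(g,f))` is a pseudo-distance on the set of
dominants: it is non-negative, vanishes on the diagonal, is symmetric, and
satisfies the triangle inequality. -/
theorem statement9 {G : Type*} [Group G] (C : Set G) (hC : IsNormalCone C)
    (hanti : ∀ f g : G, ConeGe C f g → ConeGe C g f → f = g)
    (f g h : G) (hf : IsDominant C f) (hg : IsDominant C g) (hh : IsDominant C h)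
    (Lff Lfg Lgf Lgh Lhg Lfh Lhf : ℝ)
    (hff : Tendsto (fun k : ℕ => (gammaK C f f k : ℝ) / (k : ℝ)) atTop (nhds Lff))
    (hfg : Tendsto (fun k : ℕ => (gammaK C f g k : ℝ) / (k : ℝ)) atTop (nhds Lfg))
    (hgf : Tendsto (fun k : ℕ => (gammaK C g f k : ℝ) / (k : ℝ)) atTop (nhds Lgf))
    (hgh : Tendsto (fun k : ℕ => (gammaK C g h k : ℝ) / (k : ℝ)) atTop (nhds Lgh))
    (hhg : Tendsto (fun k : ℕ => (gammaK C h g k : ℝ) / (k : ℝ)) atTop (nhds Lhg))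
    (hfh : Tendsto (fun k : ℕ => (gammaK C f h k : ℝ) / (k : ℝ)) atTop (nhds Lfh))
    (hhf : Tendsto (fun k : ℕ => (gammaK C h f k : ℝ) / (k : ℝ)) atTop (nhds Lhf)) :
    0 ≤ max (Real.log Lfg) (Real.log Lgf) ∧
    max (Real.log Lff) (Real.log Lff) = 0 ∧
    max (Real.log Lfg) (Real.log Lgf) = max (Real.log Lgf) (Real.log Lfg) ∧
    max (Real.log Lfh) (Real.log Lhf) ≤
      max (Real.log Lfg) (Real.log Lgf) + max (Real.log Lgh) (Real.log Lhg) := by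

  have honelim : ∀ (a : G), IsDominant C a →
      Tendsto (fun k : ℕ => (gammaK C a a k : ℝ) / (k : ℝ)) atTop (nhds 1) := by
    intro a ha
    refine Tendsto.congr' ?_ tendsto_const_nhds
    filter_upwards [eventually_ge_atTop 1] with k hk
    rw [gammaK_self hC hanti ha hk]
    rw [Int.cast_natCast, div_self (Nat.cast_ne_zero.mpr (by omega))]
  have key : ∀ (a b c : G), IsDominant C a → IsDominant C b → IsDominant C c →
      ∀ (Lab Lbc Lac : ℝ),
      Tendsto (fun k : ℕ => (gammaK C a b k : ℝ) / (k : ℝ)) atTop (nhds Lab) →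
      Tendsto (fun k : ℕ => (gammaK C b c k : ℝ) / (k : ℝ)) atTop (nhds Lbc) →
      Tendsto (fun k : ℕ => (gammaK C a c k : ℝ) / (k : ℝ)) atTop (nhds Lac) →
      Lac ≤ Lab * Lbc := by
    intro a b c ha hb hc Lab Lbc Lac hab hbc hac
    have hm1 : ∀ k : ℕ, 1 ≤ k → 1 ≤ (gammaK C b c k).toNat ∧
        (((gammaK C b c k).toNat : ℤ) = gammaK C b c k) := by
      intro k hk
      have := (gammaK_spec hC hanti hb hc hk).2
      omega
    have hc1 : 1 ≤ gammaK C c b 1 := (gammaK_spec hC hanti hc hb le_rfl).2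
    have hlow : ∀ k : ℕ, 1 ≤ k →
        (k : ℤ) ≤ ((gammaK C b c k).toNat : ℤ) * gammaK C c b 1 := by
      intro k hk
      calc (k : ℤ) = gammaK C c c k := (gammaK_self hC hanti hc hk).symm
        _ ≤ gammaK C c b (gammaK C b c k).toNat := gammaK_chain hC hanti hc hb hc hk
        _ ≤ _ := gammaK_le_mul hC hanti hc hb ((hm1 k hk).1)
    have hmtop : Tendsto (fun k : ℕ => (gammaK C b c k).toNat) atTop atTop := by
      rw [tendsto_atTop]
      intro N
      filter_upwards [eventually_ge_atTop (max 1 (N * (gammaK C c b 1).toNat))] with k hk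
      have hk1 : 1 ≤ k := le_trans (le_max_left _ _) hk
      have h := hlow k hk1
      have hNk : (N : ℤ) * gammaK C c b 1 ≤ (k : ℤ) := by
        have h0 : N * (gammaK C c b 1).toNat ≤ k := le_trans (le_max_right _ _) hk
        have h' : ((N * (gammaK C c b 1).toNat : ℕ) : ℤ) ≤ (k : ℤ) := by exact_mod_cast h0
        push_cast at h'
        rwa [Int.toNat_of_nonneg (by omega)] at h'
      have hfin : (N : ℤ) ≤ ((gammaK C b c k).toNat : ℤ) :=
        le_of_mul_le_mul_right (hNk.trans h) (by omega)
      exact_mod_cast hfin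
    have h2limit : Tendsto (fun k : ℕ =>
        (gammaK C a b (gammaK C b c k).toNat : ℝ) / ((gammaK C b c k).toNat : ℝ))
        atTop (nhds Lab) := hab.comp hmtop
    have h3limit : Tendsto (fun k : ℕ => (((gammaK C b c k).toNat : ℕ) : ℝ) / (k : ℝ))
        atTop (nhds Lbc) := by
      refine Tendsto.congr' ?_ hbc
      filter_upwards [eventually_ge_atTop 1] with k hk
      have e := (hm1 k hk).2
      congr 1
      exact_mod_cast e.symm
    have hle : (fun k : ℕ => (gammaK C a c k : ℝ) / (k : ℝ)) ≤ᶠ[atTop]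
        fun k : ℕ => (gammaK C a b (gammaK C b c k).toNat : ℝ) / ((gammaK C b c k).toNat : ℝ)
          * ((((gammaK C b c k).toNat : ℕ) : ℝ) / (k : ℝ)) := by
      filter_upwards [eventually_ge_atTop 1] with k hk
      have hmk1 := (hm1 k hk).1
      have hchain := gammaK_chain hC hanti ha hb hc hk
      have hknz : ((k : ℕ) : ℝ) ≠ 0 := Nat.cast_ne_zero.mpr (by omega)
      have hmnz : (((gammaK C b c k).toNat : ℕ) : ℝ) ≠ 0 := Nat.cast_ne_zero.mpr (by omega)
      have e : (gammaK C a b (gammaK C b c k).toNat : ℝ) / ((gammaK C b c k).toNat : ℝ)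
            * ((((gammaK C b c k).toNat : ℕ) : ℝ) / (k : ℝ))
          = (gammaK C a b (gammaK C b c k).toNat : ℝ) / (k : ℝ) := by
        field_simp
      rw [e]
      have hch : (gammaK C a c k : ℝ) ≤ (gammaK C a b (gammaK C b c k).toNat : ℝ) := by
        exact_mod_cast hchain
      gcongr
    exact le_of_tendsto_of_tendsto hac (h2limit.mul h3limit) hle
  have nonneg : ∀ (a b : G), IsDominant C a → IsDominant C b → ∀ L : ℝ,
      Tendsto (fun k : ℕ => (gammaK C a b k : ℝ) / (k : ℝ)) atTop (nhds L) → 0 ≤ L := by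
    intro a b ha hb L hL
    refine le_of_tendsto_of_tendsto tendsto_const_nhds hL ?_
    filter_upwards [eventually_ge_atTop 1] with k hk
    have h1 := (gammaK_spec hC hanti ha hb hk).2
    have h2 : (0 : ℝ) ≤ (gammaK C a b k : ℝ) := by exact_mod_cast (by omega : (0:ℤ) ≤ gammaK C a b k)
    positivity
  have prod_fg : 1 ≤ Lfg * Lgf := key f g f hf hg hf Lfg Lgf 1 hfg hgf (honelim f hf)
  have prod_gh : 1 ≤ Lgh * Lhg := key g h g hg hh hg Lgh Lhg 1 hgh hhg (honelim g hg)
  have prod_fh : 1 ≤ Lfh * Lhf := key f h f hf hh hf Lfh Lhf 1 hfh hhf (honelim f hf)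
  have tri1 : Lfh ≤ Lfg * Lgh := key f g h hf hg hh _ _ _ hfg hgh hfh
  have tri2 : Lhf ≤ Lhg * Lgf := key h g f hh hg hf _ _ _ hhg hgf hhf
  have nn_fg : 0 ≤ Lfg := nonneg f g hf hg _ hfg
  have nn_gf : 0 ≤ Lgf := nonneg g f hg hf _ hgf
  have nn_gh : 0 ≤ Lgh := nonneg g h hg hh _ hgh
  have nn_hg : 0 ≤ Lhg := nonneg h g hh hg _ hhg
  have nn_fh : 0 ≤ Lfh := nonneg f h hf hh _ hfh
  have nn_hf : 0 ≤ Lhf := nonneg h f hh hf _ hhf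
  have pos_fg : 0 < Lfg := by nlinarith
  have pos_gf : 0 < Lgf := by nlinarith
  have pos_gh : 0 < Lgh := by nlinarith
  have pos_hg : 0 < Lhg := by nlinarith
  have pos_fh : 0 < Lfh := by nlinarith
  have pos_hf : 0 < Lhf := by nlinarith
  have hLff : Lff = 1 := tendsto_nhds_unique hff (honelim f hf)
  refine ⟨?_, ?_, ?_, ?_⟩
  · have hone : 1 ≤ Lfg ∨ 1 ≤ Lgf := by
      by_contra hcon
      push_neg at hcon
      nlinarith [hcon.1, hcon.2]
    rcases hone with h1 | h1
    · exact le_max_of_le_left (Real.log_nonneg h1)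
    · exact le_max_of_le_right (Real.log_nonneg h1)
  · rw [hLff, Real.log_one, max_self]
  · exact max_comm _ _
  · refine max_le ?_ ?_
    · calc Real.log Lfh ≤ Real.log (Lfg * Lgh) := Real.log_le_log pos_fh tri1
        _ = Real.log Lfg + Real.log Lgh := Real.log_mul (ne_of_gt pos_fg) (ne_of_gt pos_gh)
        _ ≤ _ := add_le_add (le_max_left _ _) (le_max_left _ _)
    · calc Real.log Lhf ≤ Real.log (Lhg * Lgf) := Real.log_le_log pos_hf tri2
        _ = Real.log Lhg + Real.log Lgf := Real.log_mul (ne_of_gt pos_hg) (ne_of_gt pos_gf)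
        _ = Real.log Lgf + Real.log Lhg := add_comm _ _
        _ ≤ _ := add_le_add (le_max_right _ _) (le_max_right _ _)
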